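/- Consider the Curie–Weiss model: σ ∈ {−1,1}ⁿ with P(σ) proportional to exp{(β/n)Σ_{i<j}σᵢσⱼ + hΣᵢσᵢ}, and the Glauber dynamics Markov chain where a uniformly chosen site is resampled from the conditional Gibbs measure. Let W = Σᵢσᵢ, W' the magnetization after one step, Q₂(σ) = P(W' = W+2 | σ), and m = W/n. Then Q₂(σ) = 1/4 − m/4 + (1−m)·tanh(βm+h)/4 + (1/(4n))Σᵢ(1−σᵢ)(tanh(βmᵢ+h) − tanh(βm+h)), where mᵢ = (1/n)Σ_{j≠i}σⱼ; consequently, for the unique solution m₀ of m₀ = tanh(βm₀+h) with 0<β<1, there is a constant C depending only on β and h such that |Q₂(σ) − (1−m₀²)/4| ≤ C(|m − m₀| + 1/n). -/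

import Mathlib

open Finset

noncomputable section

lemma tanh_hasDerivAt (x : ℝ) :
    HasDerivAt Real.tanh (1 / Real.cosh x ^ 2) x := by
  have hfun : Real.tanh = fun y => Real.sinh y / Real.cosh y := by
    funext y; exact Real.tanh_eq_sinh_div_cosh y
  have h := (Real.hasDerivAt_sinh x).div (Real.hasDerivAt_cosh x) (Real.cosh_pos x).ne'
  rw [hfun]
  refine h.congr_deriv ?_
  have := Real.cosh_sq_sub_sinh_sq x
  rw [div_left_inj' (pow_ne_zero 2 (Real.cosh_pos x).ne')]
  nlinarith [this]

lemma tanh_lipschitz (a b : ℝ) :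
    |Real.tanh a - Real.tanh b| ≤ |a - b| := by
  have hlip : LipschitzWith 1 Real.tanh := by
    apply lipschitzWith_of_nnnorm_deriv_le (fun x => (tanh_hasDerivAt x).differentiableAt)
    intro x
    have h1 : deriv Real.tanh x = 1 / Real.cosh x ^ 2 := (tanh_hasDerivAt x).deriv
    rw [h1]
    have hc := Real.one_le_cosh x
    have : (1 : ℝ) / Real.cosh x ^ 2 ≤ 1 := by
      rw [div_le_one (by positivity)]; nlinarith
    have h0 : (0 : ℝ) ≤ 1 / Real.cosh x ^ 2 := by positivity
    simpa [← NNReal.coe_le_coe, Real.nnnorm_of_nonneg h0] using this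
  have := hlip.dist_le_mul a b
  simpa [Real.dist_eq] using this

lemma abs_tanh_le_one (x : ℝ) : |Real.tanh x| ≤ 1 := by
  rw [Real.tanh_eq_sinh_div_cosh, abs_div, abs_of_pos (Real.cosh_pos x),
    div_le_one (Real.cosh_pos x)]
  have h := Real.cosh_sq_sub_sinh_sq x
  have hc := Real.cosh_pos x
  rw [abs_le]
  constructor <;> nlinarith

theorem curieWeiss_Q2_representation_and_bound
    (β h : ℝ) (hβ0 : 0 < β) (hβ1 : β < 1) (m₀ : ℝ)
    (hm₀ : m₀ = Real.tanh (β * m₀ + h)) :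
    ∃ C : ℝ, 0 < C ∧ ∀ n : ℕ, 0 < n → ∀ σ : Fin n → ℝ, (∀ i, σ i = 1 ∨ σ i = -1) →
      ∀ m : ℝ, m = (∑ i, σ i) / n →
      ∀ mi : Fin n → ℝ, (∀ i, mi i = (∑ j ∈ univ.erase i, σ j) / n) →
      ∀ Q2 : ℝ,
        Q2 = (∑ i, ((1 - σ i) / 2) * ((Real.tanh (β * mi i + h) + 1) / 2)) / n →
      (Q2 = 1 / 4 - m / 4 + (1 - m) * Real.tanh (β * m + h) / 4
          + (∑ i, (1 - σ i) * (Real.tanh (β * mi i + h) - Real.tanh (β * m + h)))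
            / (4 * n))
      ∧ |Q2 - (1 - m₀ ^ 2) / 4| ≤ C * (|m - m₀| + 1 / n) := by
  refine ⟨β + 1, by linarith, ?_⟩
  intro n hn σ hσ m hm mi hmi Q2 hQ2
  have hn' : (n:ℝ) ≠ 0 := Nat.cast_ne_zero.mpr hn.ne'
  have hnpos : (0:ℝ) < n := by positivity
  set T : ℝ := Real.tanh (β * m + h) with hT
  set A : ℝ := ∑ i, (1 - σ i) * Real.tanh (β * mi i + h) with hA
  set B : ℝ := ∑ i, σ i with hB
  have hsub : ∑ i, (1 - σ i) = (n:ℝ) - B := by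
    rw [Finset.sum_sub_distrib, Finset.sum_const, Finset.card_univ, Fintype.card_fin,
      nsmul_eq_mul, mul_one, hB]
  have e1 : ∑ i, ((1 - σ i) / 2) * ((Real.tanh (β * mi i + h) + 1) / 2)
      = A / 4 + ((n:ℝ) - B) / 4 := by
    rw [hA, ← hsub, Finset.sum_div, Finset.sum_div, ← Finset.sum_add_distrib]
    exact Finset.sum_congr rfl fun i _ => by ring
  have e2 : ∑ i, (1 - σ i) * (Real.tanh (β * mi i + h) - T)
      = A - T * ((n:ℝ) - B) := by
    rw [hA, ← hsub, Finset.mul_sum, ← Finset.sum_sub_distrib]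
    exact Finset.sum_congr rfl fun i _ => by ring
  have hBm : B = n * m := by rw [hm]; field_simp
  have hrep : Q2 = 1 / 4 - m / 4 + (1 - m) * T / 4
      + (∑ i, (1 - σ i) * (Real.tanh (β * mi i + h) - T)) / (4 * n) := by
    rw [hQ2, e1, e2, hBm]
    field_simp
    ring
  refine ⟨hrep, ?_⟩
  have hEbound : |∑ i, (1 - σ i) * (Real.tanh (β * mi i + h) - T)| ≤ 2 * β := by
    have step : ∀ i ∈ univ, |(1 - σ i) * (Real.tanh (β * mi i + h) - T)| ≤ 2 * β / n := by
      intro i _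
      rw [abs_mul]
      have h1 : |1 - σ i| ≤ 2 := by rcases hσ i with hh | hh <;> rw [hh] <;> norm_num
      have hmm : mi i - m = -(σ i) / n := by
        rw [hmi i, hm, hB, ← Finset.sum_erase_add univ σ (Finset.mem_univ i)]
        field_simp
        ring
      have habs2 : |mi i - m| = 1 / n := by
        rw [hmm, abs_div, abs_neg, abs_of_pos hnpos]
        rcases hσ i with hh | hh <;> rw [hh] <;> norm_num
      have h2 : |Real.tanh (β * mi i + h) - T| ≤ β / n := by
        calc |Real.tanh (β * mi i + h) - T|
            ≤ |(β * mi i + h) - (β * m + h)| := tanh_lipschitz _ _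
          _ = β * |mi i - m| := by
              rw [show (β * mi i + h) - (β * m + h) = β * (mi i - m) by ring,
                abs_mul, abs_of_pos hβ0]
          _ = β / n := by rw [habs2]; ring
      calc |1 - σ i| * |Real.tanh (β * mi i + h) - T|
          ≤ 2 * (β / n) := mul_le_mul h1 h2 (abs_nonneg _) (by norm_num)
        _ = 2 * β / n := by ring
    calc |∑ i, (1 - σ i) * (Real.tanh (β * mi i + h) - T)|
        ≤ ∑ i, |(1 - σ i) * (Real.tanh (β * mi i + h) - T)| := Finset.abs_sum_le_sum_abs _ _
      _ ≤ ∑ _i : Fin n, 2 * β / (n:ℝ) := Finset.sum_le_sum step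
      _ = 2 * β := by
          rw [Finset.sum_const, Finset.card_univ, Fintype.card_fin, nsmul_eq_mul]
          field_simp
  set E : ℝ := ∑ i, (1 - σ i) * (Real.tanh (β * mi i + h) - T) with hE
  set T₀ : ℝ := Real.tanh (β * m₀ + h) with hT₀
  have hm₀1 : |m₀| ≤ 1 := by rw [hm₀, hT₀]; exact abs_tanh_le_one _
  have hT1 : |T| ≤ 1 := abs_tanh_le_one _
  have hTT : |T - T₀| ≤ β * |m - m₀| := by
    calc |T - T₀| ≤ |(β * m + h) - (β * m₀ + h)| := tanh_lipschitz _ _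
      _ = β * |m - m₀| := by
          rw [show (β * m + h) - (β * m₀ + h) = β * (m - m₀) by ring,
            abs_mul, abs_of_pos hβ0]
  have key : Q2 - (1 - m₀ ^ 2) / 4
      = (m₀ - m) / 4 + ((m₀ - m) * T + (1 - m₀) * (T - T₀)) / 4 + E / (4 * n) := by
    rw [hrep]
    have h4 : (1 - m₀ ^ 2) / 4 = 1 / 4 - m₀ / 4 + (1 - m₀) * T₀ / 4 := by
      rw [← hm₀]; ring
    rw [h4]; ring
  rw [key]
  have u1 : |m₀ - m| = |m - m₀| := abs_sub_comm _ _
  have u2 : |1 - m₀| ≤ 2 := by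
    have := abs_le.mp hm₀1
    rw [abs_le]; constructor <;> linarith [this.1, this.2]
  have h4abs : |(4:ℝ)| = 4 := by norm_num
  have main : |(m₀ - m) * T + (1 - m₀) * (T - T₀)| ≤ |m - m₀| + 2 * β * |m - m₀| := by
    calc |(m₀ - m) * T + (1 - m₀) * (T - T₀)|
        ≤ |(m₀ - m) * T| + |(1 - m₀) * (T - T₀)| := abs_add_le _ _
      _ = |m₀ - m| * |T| + |1 - m₀| * |T - T₀| := by rw [abs_mul, abs_mul]
      _ ≤ |m - m₀| * 1 + 2 * (β * |m - m₀|) := by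
          rw [u1]
          exact add_le_add (mul_le_mul_of_nonneg_left hT1 (abs_nonneg _))
            (mul_le_mul u2 hTT (abs_nonneg _) (by norm_num))
      _ = |m - m₀| + 2 * β * |m - m₀| := by ring
  have v1 : |(m₀ - m) / 4| = |m - m₀| / 4 := by rw [abs_div, u1, h4abs]
  have v2 : |((m₀ - m) * T + (1 - m₀) * (T - T₀)) / 4|
      ≤ (|m - m₀| + 2 * β * |m - m₀|) / 4 := by
    rw [abs_div, h4abs]
    gcongr
  have v3 : |E / (4 * n)| ≤ 2 * β / (4 * n) := by
    rw [abs_div, abs_of_pos (show (0:ℝ) < 4 * (n:ℝ) by positivity)]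
    gcongr
  have tri : |(m₀ - m) / 4 + ((m₀ - m) * T + (1 - m₀) * (T - T₀)) / 4 + E / (4 * n)|
      ≤ |(m₀ - m) / 4| + |((m₀ - m) * T + (1 - m₀) * (T - T₀)) / 4| + |E / (4 * n)| :=
    (abs_add_le _ _).trans (add_le_add_left (abs_add_le _ _) _)
  have hfin : 2 * β / (4 * (n:ℝ)) = (β / 2) * (1 / n) := by
    field_simp
    ring
  calc |(m₀ - m) / 4 + ((m₀ - m) * T + (1 - m₀) * (T - T₀)) / 4 + E / (4 * n)|
      ≤ |(m₀ - m) / 4| + |((m₀ - m) * T + (1 - m₀) * (T - T₀)) / 4| + |E / (4 * n)| := tri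
    _ ≤ |m - m₀| / 4 + (|m - m₀| + 2 * β * |m - m₀|) / 4 + (β / 2) * (1 / n) := by
        rw [v1]
        exact add_le_add (add_le_add le_rfl v2) (hfin ▸ v3)
    _ ≤ (β + 1) * (|m - m₀| + 1 / n) := by
        nlinarith [abs_nonneg (m - m₀), (show (0:ℝ) < 1 / (n:ℝ) by positivity),
          mul_nonneg hβ0.le (abs_nonneg (m - m₀)),
          mul_pos hβ0 (show (0:ℝ) < 1 / (n:ℝ) by positivity)]
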